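/- Bishop–Phelps theorem via extremality: Let Ω be a nonempty closed convex subset of a Banach space X. Then the set of support points of Ω is dense in the boundary of Ω. (A point x̄ ∈ Ω is a support point if there exists a nonzero continuous linear functional x* attaining its supremum over Ω at x̄.) -/

import Mathlib

theorem ekeland_linear {X : Type*} [NormedAddCommGroup X] [NormedSpace ℝ X] [CompleteSpace X]
    {Ω : Set X} (hcl : IsClosed Ω) (f : X →L[ℝ] ℝ) {l c : ℝ} (hl : 0 < l)
    (hbd : ∀ z ∈ Ω, f z ≤ c) {x : X} (hx : x ∈ Ω) :
    ∃ xb ∈ Ω, l * ‖xb - x‖ ≤ f xb - f x ∧ ∀ z ∈ Ω, f z ≤ f xb + l * ‖z - xb‖ := by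
  classical
  set S : X → Set X := fun a => {z | z ∈ Ω ∧ f a + l * ‖z - a‖ ≤ f z} with hSdef
  have memS_self : ∀ a ∈ Ω, a ∈ S a := by
    intro a ha; exact ⟨ha, by simp⟩
  have S_trans : ∀ a b z : X, b ∈ S a → z ∈ S b → z ∈ S a := by
    rintro a b z ⟨hbΩ, hb⟩ ⟨hzΩ, hz⟩
    refine ⟨hzΩ, ?_⟩
    have htri : ‖z - a‖ ≤ ‖z - b‖ + ‖b - a‖ := norm_sub_le_norm_sub_add_norm_sub z b a
    nlinarith [norm_nonneg (z - b), norm_nonneg (b - a)]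
  have hbdd : ∀ a, BddAbove (f '' S a) := by
    intro a; exact ⟨c, by rintro _ ⟨z, hz, rfl⟩; exact hbd z hz.1⟩
  set s : X → ℝ := fun a => sSup (f '' S a) with hsdef
  have hfs : ∀ a ∈ Ω, f a ≤ s a := fun a ha => le_csSup (hbdd a) ⟨a, memS_self a ha, rfl⟩
  have hsc : ∀ a, ∀ z ∈ S a, f z ≤ s a := fun a z hz => le_csSup (hbdd a) ⟨z, hz, rfl⟩
  have step : ∀ a : {a : X // a ∈ Ω}, ∃ b : {a : X // a ∈ Ω},
      b.1 ∈ S a.1 ∧ s a.1 + f a.1 ≤ 2 * f b.1 := by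
    rintro ⟨a, ha⟩
    rcases le_or_gt (s a) (f a) with h | h
    · exact ⟨⟨a, ha⟩, memS_self a ha, by linarith⟩
    · have hlt : (s a + f a) / 2 < s a := by linarith
      have hne' : (f '' S a).Nonempty := ⟨f a, a, memS_self a ha, rfl⟩
      obtain ⟨y, ⟨b, hb, rfl⟩, hy⟩ := exists_lt_of_lt_csSup hne' hlt
      exact ⟨⟨b, hb.1⟩, hb, by linarith⟩
  choose next hnext1 hnext2 using step
  set u : ℕ → {a : X // a ∈ Ω} := fun n => next^[n] ⟨x, hx⟩ with hudef
  have hu_succ : ∀ n, u (n + 1) = next (u n) := by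
    intro n; simp [hudef, Function.iterate_succ_apply']
  have chain : ∀ n m, n ≤ m → (u m).1 ∈ S (u n).1 := by
    intro n m hnm
    induction m, hnm using Nat.le_induction with
    | base => exact memS_self _ (u n).2
    | succ m hm ih =>
      exact S_trans _ _ _ ih (by rw [hu_succ]; exact hnext1 (u m))
  have key : ∀ a b : X, b ∈ S a → l * ‖b - a‖ ≤ f b - f a := by
    rintro a b ⟨-, h⟩; linarith
  have fmono : ∀ n m, n ≤ m → f (u n).1 ≤ f (u m).1 := by
    intro n m hnm
    have := key _ _ (chain n m hnm)
    nlinarith [norm_nonneg ((u m).1 - (u n).1)]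
  -- f (u n) converges
  have hfbd : ∀ n, f (u n).1 ≤ c := fun n => hbd _ (u n).2
  have hfc : CauchySeq fun n => f (u n).1 := by
    have : ∃ L, Filter.Tendsto (fun n => f (u n).1) Filter.atTop (nhds L) :=
      ⟨_, tendsto_atTop_ciSup (fun a b hab => fmono a b hab) ⟨c, by rintro _ ⟨n, rfl⟩; exact hfbd n⟩⟩
    obtain ⟨L, hL⟩ := this
    exact hL.cauchySeq
  have huc : CauchySeq fun n => (u n).1 := by
    rw [Metric.cauchySeq_iff]
    intro ε hε
    rw [Metric.cauchySeq_iff] at hfc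
    obtain ⟨N, hN⟩ := hfc (l * ε) (by positivity)
    refine ⟨N, fun m hm n hn => ?_⟩
    rcases le_total n m with h | h
    · have h1 := key _ _ (chain n m h)
      have h2 := hN m hm n hn
      rw [Real.dist_eq] at h2
      rw [dist_eq_norm]
      have : f (u m).1 - f (u n).1 < l * ε := lt_of_le_of_lt (le_abs_self _) h2
      nlinarith
    · have h1 := key _ _ (chain m n h)
      have h2 := hN m hm n hn
      rw [Real.dist_eq] at h2
      rw [dist_eq_norm, norm_sub_rev]
      have : f (u n).1 - f (u m).1 < l * ε := by
        have := abs_sub_comm (f (u m).1) (f (u n).1)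
        calc f (u n).1 - f (u m).1 ≤ |f (u n).1 - f (u m).1| := le_abs_self _
        _ = |f (u m).1 - f (u n).1| := (abs_sub_comm _ _)
        _ < l * ε := h2
      nlinarith
  obtain ⟨xb, hxb⟩ := cauchySeq_tendsto_of_complete huc
  have hxbΩ : xb ∈ Ω := hcl.mem_of_tendsto hxb (Filter.Eventually.of_forall fun n => (u n).2)
  -- limit inequality
  have hlim : ∀ n, l * ‖xb - (u n).1‖ ≤ f xb - f (u n).1 := by
    intro n
    have h1 : Filter.Tendsto (fun m => l * ‖(u m).1 - (u n).1‖) Filter.atTop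
        (nhds (l * ‖xb - (u n).1‖)) :=
      (((hxb.sub_const _).norm).const_mul l)
    have h2 : Filter.Tendsto (fun m => f (u m).1 - f (u n).1) Filter.atTop
        (nhds (f xb - f (u n).1)) :=
      ((f.continuous.tendsto xb).comp hxb).sub_const _
    refine le_of_tendsto_of_tendsto h1 h2 ?_
    filter_upwards [Filter.eventually_ge_atTop n] with m hm
    exact key _ _ (chain n m hm)
  have hfxb : ∀ n, f (u n).1 ≤ f xb := by
    intro n
    have := hlim n
    nlinarith [norm_nonneg (xb - (u n).1)]
  -- gap estimate
  set g : ℕ → ℝ := fun n => s (u n).1 - f (u n).1 with hgdef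
  have hg0 : ∀ n, 0 ≤ g n := fun n => by
    have := hfs _ (u n).2; simp only [hgdef]; linarith
  have hghalf : ∀ n, g (n + 1) ≤ g n / 2 := by
    intro n
    have h1 : s (u (n + 1)).1 ≤ s (u n).1 := by
      apply csSup_le_csSup (hbdd _)
      · exact ⟨f (u (n+1)).1, ⟨(u (n+1)).1, memS_self _ (u (n+1)).2, rfl⟩⟩
      · apply Set.image_mono
        intro z hz
        exact S_trans _ _ _ (by rw [hu_succ]; exact hnext1 (u n)) hz
    have h2 := hnext2 (u n)
    rw [← hu_succ] at h2
    simp only [hgdef]; linarith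
  have hgpow : ∀ n, g n ≤ g 0 / 2 ^ n := by
    intro n
    induction n with
    | zero => simp
    | succ n ih =>
      have := hghalf n
      have h2 : (0:ℝ) < 2 ^ n := by positivity
      calc g (n+1) ≤ g n / 2 := this
      _ ≤ (g 0 / 2 ^ n) / 2 := by linarith
      _ = g 0 / 2 ^ (n+1) := by ring
  refine ⟨xb, hxbΩ, by simpa [hudef] using hlim 0, ?_⟩
  intro z hz
  by_contra hcon
  push_neg at hcon
  have hη : 0 < f z - f xb - l * ‖z - xb‖ := by linarith
  have hzS : ∀ n, z ∈ S (u n).1 := by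
    intro n
    refine ⟨hz, ?_⟩
    have h1 := hlim n
    have htri : ‖z - (u n).1‖ ≤ ‖z - xb‖ + ‖xb - (u n).1‖ :=
      norm_sub_le_norm_sub_add_norm_sub z xb (u n).1
    nlinarith
  have hzn : ∀ n, f z - f (u n).1 ≤ g 0 / 2 ^ n := by
    intro n
    have := hsc _ _ (hzS n)
    have := hgpow n
    simp only [hgdef] at *
    linarith
  have htend : Filter.Tendsto (fun n : ℕ => g 0 / 2 ^ n) Filter.atTop (nhds 0) := by
    simpa using tendsto_const_nhds.div_atTop
      (tendsto_pow_atTop_atTop_of_one_lt (by norm_num : (1:ℝ) < 2))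
  obtain ⟨n, hn⟩ := (htend.eventually (gt_mem_nhds hη)).exists
  have := hzn n
  have := hfxb n
  nlinarith [norm_nonneg (z - xb)]

theorem bishop_phelps_support_points_dense {X : Type*} [NormedAddCommGroup X]
    [NormedSpace ℝ X] [CompleteSpace X] (Ω : Set X) (hne : Ω.Nonempty)
    (hcl : IsClosed Ω) (hc : Convex ℝ Ω) :
    frontier Ω ⊆
      closure {xb : X | xb ∈ Ω ∧ ∃ f : X →L[ℝ] ℝ, f ≠ 0 ∧ ∀ x ∈ Ω, f x ≤ f xb} := by
  intro x hx
  have hxΩ : x ∈ Ω := hcl.closure_eq ▸ frontier_subset_closure hx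
  rw [Metric.mem_closure_iff]
  intro ε hε
  -- find a point outside Ω close to x
  have hxc : x ∈ closure Ωᶜ := by
    rw [closure_compl]
    exact fun h => hx.2 h
  rw [Metric.mem_closure_iff] at hxc
  obtain ⟨y, hy, hyd⟩ := hxc (ε / 4) (by positivity)
  -- separate y from Ω
  obtain ⟨f, t, hft, hty⟩ := geometric_hahn_banach_closed_point hc hcl hy
  have hfne : f ≠ 0 := by
    obtain ⟨a, ha⟩ := hne
    intro h
    rw [h] at hft hty
    exact absurd hty (not_lt.2 (hft a ha).le)
  have hfpos : (0:ℝ) < ‖f‖ := by simpa [norm_pos_iff] using hfne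
  have hfx : t - ‖f‖ * (ε / 4) < f x := by
    have h1 : f y - f x ≤ ‖f‖ * ‖y - x‖ := by
      have := f.le_opNorm (y - x)
      calc f y - f x = f (y - x) := by rw [map_sub]
      _ ≤ |f (y - x)| := le_abs_self _
      _ = ‖f (y - x)‖ := (Real.norm_eq_abs _).symm
      _ ≤ ‖f‖ * ‖y - x‖ := this
    have h2 : ‖y - x‖ < ε / 4 := by rwa [dist_comm, dist_eq_norm] at hyd
    nlinarith
  -- Ekeland
  obtain ⟨xb, hxbΩ, hxbd, hxbmax⟩ :=
    ekeland_linear hcl f (l := ‖f‖ / 2) (by positivity)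
      (fun z hz => (hft z hz).le) hxΩ
  have hfxb : f xb ≤ t := (hft xb hxbΩ).le
  have hdist : dist x xb < ε := by
    rw [dist_eq_norm, norm_sub_rev]
    nlinarith
  set l : ℝ := ‖f‖ / 2 with hldef
  have hll : l < ‖f‖ := by rw [hldef]; linarith
  have hl0 : 0 < l := by positivity
  -- the open convex cone
  set U : Set X := {v | l * ‖v‖ < f v} with hUdef
  have hUopen : IsOpen U := isOpen_lt (continuous_const.mul continuous_norm) f.continuous
  have hUconv : Convex ℝ U := by
    intro a ha b hb p q hp hq hpq
    simp only [hUdef, Set.mem_setOf_eq] at ha hb ⊢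
    rw [map_add, map_smul, map_smul, smul_eq_mul, smul_eq_mul]
    have htri : ‖p • a + q • b‖ ≤ p * ‖a‖ + q * ‖b‖ := by
      calc ‖p • a + q • b‖ ≤ ‖p • a‖ + ‖q • b‖ := norm_add_le _ _
      _ = p * ‖a‖ + q * ‖b‖ := by
          rw [norm_smul, norm_smul, Real.norm_eq_abs, Real.norm_eq_abs,
            abs_of_nonneg hp, abs_of_nonneg hq]
    rcases hp.eq_or_lt with hp0 | hp0
    · have hq1 : q = 1 := by linarith
      subst hq1
      simp only [← hp0, zero_smul, zero_add, zero_mul, one_smul, one_mul]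
      exact hb
    · nlinarith [mul_lt_mul_of_pos_left ha hp0, mul_le_mul_of_nonneg_left hb.le hq,
        mul_le_mul_of_nonneg_left htri hl0.le]
  have hUne : U.Nonempty := by
    by_contra h
    have hb : ∀ v : X, f v ≤ l * ‖v‖ := by
      intro v
      by_contra hv
      push_neg at hv
      exact h ⟨v, hv⟩
    have : ‖f‖ ≤ l := by
      apply f.opNorm_le_bound hl0.le
      intro v
      rw [Real.norm_eq_abs, abs_le]
      constructor
      · have := hb (-v)
        rw [map_neg, norm_neg] at this
        linarith
      · exact (hb v).trans (by rfl)
    linarith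
  -- translated Ω
  set C : Set X := (fun z => z - xb) '' Ω with hCdef
  have hCconv : Convex ℝ C := by
    have : (fun z : X => z - xb) = fun z => -xb + z := by
      funext z; rw [sub_eq_neg_add]
    rw [hCdef, this]
    exact hc.translate (-xb)
  have hdisj : Disjoint U C := by
    rw [Set.disjoint_left]
    rintro v hv ⟨z, hz, rfl⟩
    simp only [hUdef, Set.mem_setOf_eq] at hv
    rw [map_sub] at hv
    have := hxbmax z hz
    linarith
  obtain ⟨F, u, hFU, hFC⟩ := geometric_hahn_banach_open hUconv hUopen hCconv hdisj
  have h0C : (0:X) ∈ C := ⟨xb, hxbΩ, sub_self xb⟩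
  have hu0 : u ≤ 0 := by simpa using hFC 0 h0C
  obtain ⟨v₀, hv₀⟩ := hUne
  have hsmul : ∀ r : ℝ, 0 < r → r • v₀ ∈ U := by
    intro r hr
    simp only [hUdef, Set.mem_setOf_eq] at hv₀ ⊢
    rw [map_smul, smul_eq_mul, norm_smul, Real.norm_eq_abs, abs_of_pos hr]
    calc l * (r * ‖v₀‖) = r * (l * ‖v₀‖) := by ring
    _ < r * f v₀ := by exact mul_lt_mul_of_pos_left hv₀ hr
  have hu0' : 0 ≤ u := by
    have hseq : ∀ n : ℕ, (1 / ((n:ℝ) + 1)) * F v₀ ≤ u := by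
      intro n
      have hr : (0:ℝ) < 1 / ((n:ℝ) + 1) := by positivity
      have := hFU _ (hsmul _ hr)
      rw [map_smul, smul_eq_mul] at this
      exact this.le
    have htend : Filter.Tendsto (fun n : ℕ => (1 / ((n:ℝ) + 1)) * F v₀)
        Filter.atTop (nhds 0) := by
      have h1 : Filter.Tendsto (fun n : ℕ => 1 / ((n:ℝ) + 1)) Filter.atTop (nhds 0) :=
        tendsto_one_div_add_atTop_nhds_zero_nat
      simpa using h1.mul_const (F v₀)
    exact le_of_tendsto htend (Filter.Eventually.of_forall hseq)
  have hFv₀ : F v₀ < 0 := lt_of_lt_of_le (hFU v₀ hv₀) hu0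
  have hFne : (-F) ≠ 0 := by
    intro h
    have : (-F) v₀ = 0 := by rw [h]; rfl
    simp only [ContinuousLinearMap.neg_apply] at this
    linarith
  refine ⟨xb, ⟨hxbΩ, -F, hFne, ?_⟩, hdist⟩
  intro z hz
  have h1 : u ≤ F (z - xb) := hFC _ ⟨z, hz, rfl⟩
  simp only [ContinuousLinearMap.neg_apply]
  rw [map_sub] at h1
  linarith
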